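/- Let ω ∈ [0, 1/3), set p_A = (ω + 1)/2 and p_U = 2ω. Then p_A − p_U = (1 − 3ω)/2 > 0, and for any positive integer n, reals ℓ_A, ℓ_U, ℓ_B > 0, ρ = ℓ_A/ℓ_U, threshold τ̂ = n(p_A + p_U)/2 − ln(ρ)/(2(1 − 3ω)) satisfying n·p_U ≤ τ̂ ≤ n·p_A, and independent random variables ε₁, …, ε_n in [0,1] with E[ε_i] ≥ p_A for all i, it holds that n·ℓ_B + P(Σ_{i=1}^n ε_i < τ̂)·ℓ_A ≤ n·ℓ_B + exp(−n(1 − 3ω)²/8)·√(ℓ_A·ℓ_U). -/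

import Mathlib

open MeasureTheory ProbabilityTheory

/-- Application of Theorem 1 to the Swiss-Knife / Hitomi protocols: with channel noise
`w ∈ [0, 1/3)`, `pA = (w + 1)/2`, `pU = 2w`, the gap is `pA - pU = (1 - 3w)/2 > 0` and
the attacker's expected loss is bounded by `n ℓB + exp (-n (1 - 3w)² / 8) √(ℓA ℓU)`. -/
lemma bernoulli_mgf_bound' (p t : ℝ) (hp0 : 0 ≤ p) (hp1 : p ≤ 1) :
    1 - p + p * Real.exp t ≤ Real.exp (p * t + t ^ 2 / 8) := by
  have hD : ∀ s : ℝ, 0 < 1 - p + p * Real.exp s := by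
    intro s
    rcases hp0.eq_or_lt with h | h
    · simp [← h]
    · have := Real.exp_pos s
      nlinarith
  set f : ℝ → ℝ := fun s => p * s + s ^ 2 / 8 - Real.log (1 - p + p * Real.exp s) with hf
  set g : ℝ → ℝ := fun s => p + s / 4 - p * Real.exp s / (1 - p + p * Real.exp s) with hg
  have hDd : ∀ s : ℝ, HasDerivAt (fun s => 1 - p + p * Real.exp s) (p * Real.exp s) s :=
    fun s => ((Real.hasDerivAt_exp s).const_mul p).const_add (1 - p)
  have hfd : ∀ s : ℝ, HasDerivAt f (g s) s := by
    intro s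
    have h2 : HasDerivAt (fun s => Real.log (1 - p + p * Real.exp s))
        (p * Real.exp s / (1 - p + p * Real.exp s)) s := (hDd s).log (hD s).ne'
    have h3 : HasDerivAt (fun s : ℝ => p * s + s ^ 2 / 8) (p + s / 4) s := by
      have := ((hasDerivAt_id s).const_mul p).add ((hasDerivAt_pow 2 s).div_const 8)
      exact this.congr_deriv (by norm_num; ring)
    exact h3.sub h2
  have hgd : ∀ s : ℝ, HasDerivAt g
      (1 / 4 - p * Real.exp s * (1 - p) / (1 - p + p * Real.exp s) ^ 2) s := by
    intro s
    have hnum : HasDerivAt (fun s => p * Real.exp s) (p * Real.exp s) s :=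
      (Real.hasDerivAt_exp s).const_mul p
    have hdiv := hnum.div (hDd s) (hD s).ne'
    have h3 : HasDerivAt (fun s : ℝ => p + s / 4) (1 / 4) s := by
      have := (hasDerivAt_id s).div_const 4
      exact this.const_add p
    have := h3.sub hdiv
    have := (hD s).ne'
    exact (h3.sub hdiv).congr_deriv (by ring)
  have hgmono : Monotone g := by
    refine monotone_of_deriv_nonneg (fun s => (hgd s).differentiableAt) (fun s => ?_)
    rw [(hgd s).deriv]
    have h1 := hD s
    have h2 : (0:ℝ) < (1 - p + p * Real.exp s) ^ 2 := by positivity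
    rw [sub_nonneg, div_le_iff₀ h2]
    nlinarith [sq_nonneg (1 - p - p * Real.exp s)]
  have hg0 : g 0 = 0 := by
    have : (1:ℝ) - p + p * Real.exp 0 = 1 := by simp
    simp only [hg, Real.exp_zero, mul_one]
    have h : (1:ℝ) - p + p = 1 := by ring
    rw [h]
    simp
  have hf0 : f 0 = 0 := by
    simp only [hf, Real.exp_zero, mul_one]
    have h : (1:ℝ) - p + p = 1 := by ring
    rw [h]
    simp
  have hcont : Continuous f := by
    have : Differentiable ℝ f := fun s => (hfd s).differentiableAt
    exact this.continuous
  have hfnonneg : ∀ s : ℝ, 0 ≤ f s := by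
    intro s
    rcases le_total 0 s with hs | hs
    · have hmono : MonotoneOn f (Set.Ici 0) := by
        refine monotoneOn_of_deriv_nonneg (convex_Ici 0) hcont.continuousOn
          (fun x _ => (hfd x).differentiableAt.differentiableWithinAt) (fun x hx => ?_)
        rw [(hfd x).deriv, ← hg0]
        exact hgmono (le_of_lt (by simpa using hx))
      have := hmono (Set.self_mem_Ici) (by exact hs) hs
      rwa [hf0] at this
    · have hanti : AntitoneOn f (Set.Iic 0) := by
        refine antitoneOn_of_deriv_nonpos (convex_Iic 0) hcont.continuousOn
          (fun x _ => (hfd x).differentiableAt.differentiableWithinAt) (fun x hx => ?_)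
        rw [(hfd x).deriv, ← hg0]
        exact hgmono (le_of_lt (by simpa using hx))
      have := hanti (by exact hs) (Set.self_mem_Iic) hs
      rwa [hf0] at this
  have h := hfnonneg t
  have hlog : Real.log (1 - p + p * Real.exp t) ≤ p * t + t ^ 2 / 8 := by
    simp only [hf] at h
    linarith
  calc 1 - p + p * Real.exp t = Real.exp (Real.log (1 - p + p * Real.exp t)) :=
        (Real.exp_log (hD t)).symm
    _ ≤ Real.exp (p * t + t ^ 2 / 8) := Real.exp_le_exp.2 hlog

theorem swiss_knife_bound
    (w : ℝ) (hw0 : 0 ≤ w) (hw1 : w < 1 / 3)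
    (pA pU : ℝ) (hpA : pA = (w + 1) / 2) (hpU : pU = 2 * w) :
    pA - pU = (1 - 3 * w) / 2 ∧ 0 < pA - pU ∧
    ∀ {Ω : Type} [MeasureSpace Ω] [IsProbabilityMeasure (ℙ : Measure Ω)]
      (n : ℕ), 0 < n →
      ∀ (ℓA ℓU ℓB : ℝ), 0 < ℓA → 0 < ℓU → 0 < ℓB →
      ∀ (ρ : ℝ), ρ = ℓA / ℓU →
      ∀ (τ : ℝ), τ = n * (pA + pU) / 2 - Real.log ρ / (2 * (1 - 3 * w)) →
      n * pU ≤ τ → τ ≤ n * pA →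
      ∀ (ε : Fin n → Ω → ℝ),
        (∀ i, Measurable (ε i)) →
        iIndepFun ε ℙ →
        (∀ i ω, ε i ω ∈ Set.Icc (0 : ℝ) 1) →
        (∀ i, pA ≤ ∫ ω, ε i ω) →
        n * ℓB + (ℙ {ω | ∑ i, ε i ω < τ}).toReal * ℓA
          ≤ n * ℓB + Real.exp (-(n * (1 - 3 * w) ^ 2) / 8) * Real.sqrt (ℓA * ℓU) := by
  refine ⟨by rw [hpA, hpU]; ring, by rw [hpA, hpU]; linarith, ?_⟩
  intro Ω _ _ n hn ℓA ℓU ℓB hℓA hℓU hℓB ρ hρ τ hτ hτl hτu ε hmeas hIndep hbound hEbound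
  have hn' : (0:ℝ) < n := by exact_mod_cast hn
  -- abbreviations
  set G : ℝ := (1 - 3 * w) / 2 with hG
  have hGpos : 0 < G := by rw [hG]; linarith
  set L : ℝ := Real.log ρ with hL
  set s : ℝ := n * pA - τ with hs
  have hs_eq : s = n * G / 2 + L / (4 * G) := by
    have h1 : (1:ℝ) - 3 * w ≠ 0 := by linarith
    have h2 : (2:ℝ) - 6 * w ≠ 0 := by linarith
    rw [hs, hτ, hpA, hpU, hG, hL]
    field_simp
    have h3 : (1:ℝ) - w * 3 ≠ 0 := by linarith
    field_simp
    ring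
  have hs0 : 0 ≤ s := by rw [hs]; linarith
  set t : ℝ := -(4 * s) / n with ht
  have ht0 : t ≤ 0 := by
    rw [ht]
    apply div_nonpos_of_nonpos_of_nonneg <;> linarith
  -- integrability of exp (t * ε i)
  have hXint : ∀ i, Integrable (ε i) ℙ := by
    intro i
    refine Integrable.mono' (integrable_const 1) (hmeas i).aestronglyMeasurable
      (ae_of_all _ fun ω => ?_)
    have h := hbound i ω
    rw [Real.norm_eq_abs, abs_le]
    exact ⟨by linarith [h.1], h.2⟩
  have hint : ∀ i, Integrable (fun ω => Real.exp (t * ε i ω)) ℙ := by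
    intro i
    refine Integrable.mono' (integrable_const (Real.exp |t|))
      (((hmeas i).const_mul t).exp).aestronglyMeasurable (ae_of_all _ fun ω => ?_)
    rw [Real.norm_eq_abs, Real.abs_exp]
    apply Real.exp_le_exp.2
    have h := hbound i ω
    calc t * ε i ω ≤ |t * ε i ω| := le_abs_self _
      _ = |t| * |ε i ω| := abs_mul _ _
      _ ≤ |t| * 1 := by
          gcongr
          rw [abs_le]; exact ⟨by linarith [h.1], h.2⟩
      _ = |t| := mul_one _
  -- per-coordinate mgf bound
  have hmgf : ∀ i, mgf (ε i) ℙ t ≤ Real.exp (pA * t + t ^ 2 / 8) := by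
    intro i
    set μi : ℝ := ∫ ω, ε i ω with hμi
    have hμ0 : 0 ≤ μi := integral_nonneg fun ω => (hbound i ω).1
    have hμ1 : μi ≤ 1 := by
      have := integral_mono (hXint i) (integrable_const 1) (fun ω => (hbound i ω).2)
      simpa using this
    have hpt : ∀ x : ℝ, x ∈ Set.Icc (0:ℝ) 1 → Real.exp (t * x) ≤ 1 - x + x * Real.exp t := by
      intro x hx
      have := convexOn_exp.2 (Set.mem_univ (0:ℝ)) (Set.mem_univ t)
        (by linarith [hx.2] : (0:ℝ) ≤ 1 - x) hx.1 (by ring)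
      simpa [smul_eq_mul, Real.exp_zero, mul_comm] using this
    have step1 : mgf (ε i) ℙ t ≤ 1 - μi + μi * Real.exp t := by
      have hrint : Integrable (fun ω => 1 - ε i ω + ε i ω * Real.exp t) ℙ :=
        ((integrable_const 1).sub (hXint i)).add ((hXint i).mul_const _)
      have := integral_mono (hint i) hrint (fun ω => hpt _ (hbound i ω))
      calc mgf (ε i) ℙ t = ∫ ω, Real.exp (t * ε i ω) := rfl
        _ ≤ ∫ ω, (1 - ε i ω + ε i ω * Real.exp t) := this
        _ = 1 - μi + μi * Real.exp t := by
            have e1 : ∫ ω, (1 - ε i ω + ε i ω * Real.exp t) =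
                (∫ ω, (1 - ε i ω)) + ∫ ω, ε i ω * Real.exp t :=
              integral_add ((integrable_const 1).sub (hXint i)) ((hXint i).mul_const _)
            have e2 : ∫ ω, (1 - ε i ω) = 1 - μi := by
              have := integral_sub (integrable_const (1:ℝ)) (hXint i)
              simpa using this
            have e3 : ∫ ω, ε i ω * Real.exp t = μi * Real.exp t :=
              integral_mul_const _ _
            rw [e1, e2, e3]
    have step2 := bernoulli_mgf_bound' μi t hμ0 hμ1
    have step3 : Real.exp (μi * t + t ^ 2 / 8) ≤ Real.exp (pA * t + t ^ 2 / 8) := by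
      apply Real.exp_le_exp.2
      have := mul_le_mul_of_nonpos_right (hEbound i) ht0
      linarith
    linarith
  -- mgf of the sum
  have hSmgf : mgf (∑ i, ε i) ℙ t ≤ Real.exp (n * (pA * t + t ^ 2 / 8)) := by
    rw [hIndep.mgf_sum hmeas]
    calc ∏ i, mgf (ε i) ℙ t ≤ ∏ _i : Fin n, Real.exp (pA * t + t ^ 2 / 8) :=
          Finset.prod_le_prod (fun i _ => mgf_nonneg) (fun i _ => hmgf i)
      _ = Real.exp (n * (pA * t + t ^ 2 / 8)) := by
          rw [Finset.prod_const, ← Real.exp_nat_mul]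
          simp
  -- Chernoff
  have hintsum : Integrable (fun ω => Real.exp (t * (∑ i, ε i) ω)) ℙ :=
    hIndep.integrable_exp_mul_sum hmeas (fun i _ => hint i)
  have hcher : (ℙ {ω | ∑ i, ε i ω < τ}).toReal ≤ Real.exp (-t * τ) * mgf (∑ i, ε i) ℙ t := by
    refine le_trans ?_ (measure_le_le_exp_mul_mgf τ ht0 hintsum)
    refine ENNReal.toReal_mono (measure_ne_top _ _) (measure_mono ?_)
    intro ω hω
    simp only [Set.mem_setOf_eq, Finset.sum_apply] at *
    exact le_of_lt hω
  have hP : (ℙ {ω | ∑ i, ε i ω < τ}).toReal ≤ Real.exp (-(2 * s ^ 2) / n) := by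
    have hexp : -t * τ + n * (pA * t + t ^ 2 / 8) = -(2 * s ^ 2) / n := by
      rw [ht, hs]
      field_simp
      ring
    calc (ℙ {ω | ∑ i, ε i ω < τ}).toReal
        ≤ Real.exp (-t * τ) * mgf (∑ i, ε i) ℙ t := hcher
      _ ≤ Real.exp (-t * τ) * Real.exp (n * (pA * t + t ^ 2 / 8)) :=
          mul_le_mul_of_nonneg_left hSmgf (Real.exp_pos _).le
      _ = Real.exp (-(2 * s ^ 2) / n) := by rw [← Real.exp_add, hexp]
  -- final algebra
  have hsqrt : Real.sqrt (ℓA * ℓU) = Real.exp (-L / 2) * ℓA := by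
    have hLdef : L = Real.log ℓA - Real.log ℓU := by
      rw [hL, hρ, Real.log_div hℓA.ne' hℓU.ne']
    have hsq : (Real.exp (-L / 2) * ℓA) ^ 2 = ℓA * ℓU := by
      have h1 : Real.exp (-L / 2) ^ 2 = Real.exp (-L) := by
        rw [sq, ← Real.exp_add]; ring_nf
      rw [mul_pow, h1, hLdef, neg_sub, Real.exp_sub, Real.exp_log hℓA, Real.exp_log hℓU]
      field_simp
    rw [← hsq, Real.sqrt_sq (by positivity)]
  have hexp2 : Real.exp (-(2 * s ^ 2) / n) ≤
      Real.exp (-(n * (1 - 3 * w) ^ 2) / 8) * Real.exp (-L / 2) := by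
    rw [← Real.exp_add]
    apply Real.exp_le_exp.2
    have hkey : 2 * s ^ 2 / n - (n * G ^ 2 / 2 + L / 2) = L ^ 2 / (8 * n * G ^ 2) := by
      rw [hs_eq]
      field_simp
      ring
    have hpos : 0 ≤ L ^ 2 / (8 * n * G ^ 2) := by positivity
    have hGsq : n * (1 - 3 * w) ^ 2 / 8 = n * G ^ 2 / 2 := by rw [hG]; ring
    have : n * G ^ 2 / 2 + L / 2 ≤ 2 * s ^ 2 / n := by linarith
    have h2 : -(2 * s ^ 2) / n = -(2 * s ^ 2 / n) := by ring
    rw [h2]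
    linarith [hGsq]
  have hfinal : (ℙ {ω | ∑ i, ε i ω < τ}).toReal * ℓA
      ≤ Real.exp (-(n * (1 - 3 * w) ^ 2) / 8) * Real.sqrt (ℓA * ℓU) := by
    rw [hsqrt]
    calc (ℙ {ω | ∑ i, ε i ω < τ}).toReal * ℓA
        ≤ Real.exp (-(2 * s ^ 2) / n) * ℓA := mul_le_mul_of_nonneg_right hP hℓA.le
      _ ≤ (Real.exp (-(n * (1 - 3 * w) ^ 2) / 8) * Real.exp (-L / 2)) * ℓA :=
          mul_le_mul_of_nonneg_right hexp2 hℓA.le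
      _ = Real.exp (-(n * (1 - 3 * w) ^ 2) / 8) * (Real.exp (-L / 2) * ℓA) := by ring
  linarith
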